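/- Let (h, η, ξ, Φ, g) be a coKähler Lie algebra of dimension 2n-1 with fundamental form ω = g(·,Φ·), and let D be a derivation of h with Dω = αω (α ≠ 0), Dη = 0, Dξ = 0, DΦ = ΦD. Then on g = h ⋊_D ℝ, the 2-form Ω = ω + η∧θ with θ(X,a) = -αa satisfies dΩ = θ∧Ω and dθ = 0. -/
import Mathlib


/-- Let `(h, η, ξ, Φ, g)` be a coKähler Lie algebra with fundamental form
`ω = g(·,Φ·)`, and `D` a derivation with `Dω = αω` (`α ≠ 0`), `Dη = 0`, `Dξ = 0`,
`DΦ = ΦD`. Then on `g = h ⋊_D ℝ`, the 2-form `Ω = ω + η ∧ θ` with `θ(X,a) = -αa`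
satisfies `dΩ = θ ∧ Ω` and `dθ = 0`. -/
theorem stmt12 (H : Type*) [LieRing H] [LieAlgebra ℝ H]
    (gm : H →ₗ[ℝ] H →ₗ[ℝ] ℝ) (η : H →ₗ[ℝ] ℝ) (ξ : H) (Φ : H →ₗ[ℝ] H)
    (D : H →ₗ[ℝ] H) (α : ℝ) (hα : α ≠ 0)
    (hgsym : ∀ x y : H, gm x y = gm y x)
    (hgpos : ∀ x : H, x ≠ 0 → 0 < gm x x)
    (hηξ : η ξ = 1)
    (hΦ2 : ∀ x : H, Φ (Φ x) = -x + η x • ξ)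
    (hcomp : ∀ x y : H, gm (Φ x) (Φ y) = gm x y - η x * η y)
    (ω : H → H → ℝ) (hω : ∀ x y : H, ω x y = gm x (Φ y))
    (hdη : ∀ x y : H, η ⁅x, y⁆ = 0)
    (hdω : ∀ x y z : H, -ω ⁅x, y⁆ z + ω ⁅x, z⁆ y - ω ⁅y, z⁆ x = 0)
    (hD : ∀ x y : H, D ⁅x, y⁆ = ⁅D x, y⁆ + ⁅x, D y⁆)
    (hDω : ∀ x y : H, ω (D x) y + ω x (D y) = α * ω x y)
    (hDη : ∀ x : H, η (D x) = 0) (hDξ : D ξ = 0)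
    (hDΦ : ∀ x : H, D (Φ x) = Φ (D x))
    -- the semidirect product `h ⋊_D ℝ`, realized on `H × ℝ`:
    (br : H × ℝ → H × ℝ → H × ℝ)
    (hbr : ∀ u v : H × ℝ, br u v = (⁅u.1, v.1⁆ + u.2 • D v.1 - v.2 • D u.1, 0))
    (θ : H × ℝ → ℝ) (hθ : ∀ u : H × ℝ, θ u = -α * u.2)
    (Ω : H × ℝ → H × ℝ → ℝ)
    (hΩ : ∀ u v : H × ℝ, Ω u v = ω u.1 v.1 + η u.1 * θ v - η v.1 * θ u) :
    (∀ u v : H × ℝ, θ (br u v) = 0) ∧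
    (∀ u v w : H × ℝ, -Ω (br u v) w + Ω (br u w) v - Ω (br v w) u
        = θ u * Ω v w - θ v * Ω u w + θ w * Ω u v) := by
  -- Φ ξ = 0
  have hξ0 : ξ ≠ 0 := by
    intro h; rw [h, map_zero] at hηξ; exact one_ne_zero hηξ.symm
  have h1 : Φ (Φ ξ) = 0 := by rw [hΦ2 ξ, hηξ]; simp
  have hΦξ : Φ ξ = 0 := by
    have h2 : Φ ξ = η (Φ ξ) • ξ := by
      have h := hΦ2 (Φ ξ); rw [h1, map_zero] at h
      linear_combination (norm := module) h
    have h3 : (η (Φ ξ) * η (Φ ξ)) • ξ = 0 := by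
      calc (η (Φ ξ) * η (Φ ξ)) • ξ = η (Φ ξ) • (η (Φ ξ) • ξ) := by rw [smul_smul]
        _ = η (Φ ξ) • Φ ξ := by rw [← h2]
        _ = Φ (η (Φ ξ) • ξ) := by rw [map_smul]
        _ = Φ (Φ ξ) := by rw [← h2]
        _ = 0 := h1
    rcases smul_eq_zero.mp h3 with h | h
    · rw [h2, mul_self_eq_zero.mp h, zero_smul]
    · exact absurd h hξ0
  -- g(ξ, y) = η y
  have hgξ : ∀ y : H, gm ξ y = η y := by
    intro y
    have h := hcomp ξ y
    rw [hΦξ, hηξ, map_zero, LinearMap.zero_apply] at h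
    linarith
  have hgξ' : ∀ y : H, gm y ξ = η y := fun y => by rw [hgsym, hgξ]
  -- η (Φ x) = 0
  have hηΦ : ∀ x : H, η (Φ x) = 0 := by
    intro x
    have hc := hcomp (Φ x) (Φ x)
    rw [hΦ2 x] at hc
    have hexp : gm (-x + η x • ξ) (-x + η x • ξ)
        = gm x x - 2 * η x * η x + η x * η x := by
      simp only [map_add, map_neg, map_smul, LinearMap.add_apply,
        LinearMap.neg_apply, LinearMap.smul_apply, smul_eq_mul, hgξ, hgξ', hηξ]
      ring
    rw [hexp] at hc
    have hcΦ := hcomp x x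
    have : η (Φ x) * η (Φ x) = 0 := by linarith
    exact mul_self_eq_zero.mp this
  -- skew symmetry of ω
  have hskew : ∀ x y : H, ω y x = - ω x y := by
    intro x y
    have hc := hcomp (Φ x) y
    rw [hΦ2 x, hηΦ x] at hc
    have hexp : gm (-x + η x • ξ) (Φ y) = - gm x (Φ y) + η x * η (Φ y) := by
      simp only [map_add, map_neg, map_smul, LinearMap.add_apply,
        LinearMap.neg_apply, LinearMap.smul_apply, smul_eq_mul, hgξ]
    rw [hexp, hηΦ y] at hc
    have hg : gm (Φ x) y = - gm x (Φ y) := by linarith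
    rw [hω y x, hω x y, hgsym y (Φ x), hg]
  -- key identity
  have key : ∀ p q : H, ω (D q) p - ω (D p) q = -α * ω p q := by
    intro p q
    have h1 := hDω p q
    have h2 := hskew (D q) p
    linarith
  -- expansion lemmas
  have ωexp : ∀ (p q r : H) (s t : ℝ),
      ω (⁅p, q⁆ + s • D q - t • D p) r
        = ω ⁅p, q⁆ r + s * ω (D q) r - t * ω (D p) r := by
    intro p q r s t
    simp only [hω, map_add, map_sub, map_smul, LinearMap.add_apply,
      LinearMap.sub_apply, LinearMap.smul_apply, smul_eq_mul]
  have ηexp : ∀ (p q : H) (s t : ℝ), η (⁅p, q⁆ + s • D q - t • D p) = 0 := by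
    intro p q s t
    simp [map_add, map_sub, map_smul, hdη, hDη]
  constructor
  · intro u v
    rw [hbr, hθ]
    simp
  · rintro ⟨x, a⟩ ⟨y, b⟩ ⟨z, c⟩
    simp only [hbr, hΩ, hθ, ωexp, ηexp]
    linear_combination hdω x y z + a * key y z - b * key x z + c * key x y
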